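/- arXiv:1004.4016 — 3 statements merged into one kernel-verified Lean document; each statement's English description precedes it below -/
import Mathlib

section
/- Let f : ℝ → ℝ be twice continuously differentiable, H : ℝ → ℝ continuously differentiable, and Υ > 0. Suppose f satisfies f''(t) + 3 H(t) f'(t) + Υ² f(t) = 0 on [a,b] with f(a) = f(b) = 0. Then ∫_a^b f'(t)²/Υ² dt = (∫_a^b f(t)² dt) · (1 − (3/(2Υ²)) · H̄'), where H̄' = (∫_a^b H'(t) f(t)² dt)/(∫_a^b f(t)² dt), assuming ∫_a^b f(t)² dt ≠ 0. -/
open intervalIntegral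

/-- Key integration-by-parts identity: for a solution of the damped oscillator
`f'' + 3 H f' + Υ² f = 0` on `[a,b]` with `f(a) = f(b) = 0`,
`∫ f'²/Υ² = (∫ f²)(1 − (3/(2Υ²)) H̄')` where `H̄' = (∫ H' f²)/(∫ f²)`. -/
theorem stmt0 (f H : ℝ → ℝ) (Υ a b : ℝ) (hab : a ≤ b)
    (hf : ContDiff ℝ 2 f) (hH : ContDiff ℝ 1 H) (hΥ : 0 < Υ)
    (hode : ∀ t ∈ Set.Icc a b,
      deriv (deriv f) t + 3 * H t * deriv f t + Υ ^ 2 * f t = 0)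
    (hfa : f a = 0) (hfb : f b = 0)
    (hne : (∫ t in a..b, f t ^ 2) ≠ 0) :
    (∫ t in a..b, (deriv f t) ^ 2 / Υ ^ 2) =
      (∫ t in a..b, f t ^ 2) *
        (1 - (3 / (2 * Υ ^ 2)) *
          ((∫ t in a..b, deriv H t * f t ^ 2) / (∫ t in a..b, f t ^ 2))) := by
  have hf1 : ContDiff ℝ 1 f := hf.of_le (by norm_num)
  have hf' : ContDiff ℝ 1 (deriv f) :=
    (contDiff_succ_iff_deriv.mp (show ContDiff ℝ ((1:ℕ)+1) f by exact_mod_cast hf)).2.2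
  have hcf : Continuous f := hf.continuous
  have hcf' : Continuous (deriv f) := hf'.continuous
  have hcf'' : Continuous (deriv (deriv f)) := hf'.continuous_deriv le_rfl
  have hcH : Continuous H := hH.continuous
  have hcH' : Continuous (deriv H) := hH.continuous_deriv le_rfl
  set G : ℝ → ℝ := fun t => deriv f t * f t + 3 / 2 * (H t * f t ^ 2) with hG
  set g : ℝ → ℝ := fun t =>
    deriv f t ^ 2 + 3 / 2 * deriv H t * f t ^ 2 - Υ ^ 2 * f t ^ 2 with hg
  have hderiv : ∀ t ∈ Set.uIcc a b, HasDerivAt G (g t) t := by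
    intro t ht
    rw [Set.uIcc_of_le hab] at ht
    have h1 : HasDerivAt f (deriv f t) t :=
      (hf1.differentiable one_ne_zero t).hasDerivAt
    have h2 : HasDerivAt (deriv f) (deriv (deriv f) t) t :=
      (hf'.differentiable one_ne_zero t).hasDerivAt
    have h3 : HasDerivAt H (deriv H t) t :=
      (hH.differentiable one_ne_zero t).hasDerivAt
    have := (h2.mul h1).add ((h3.mul (h1.pow 2)).const_mul (3 / 2 : ℝ))
    refine HasDerivAt.congr_deriv (f := G) this ?_
    have hodet := hode t ht
    have : deriv (deriv f) t = -(3 * H t * deriv f t) - Υ ^ 2 * f t := by linarith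
    simp only [hg, this, Pi.pow_apply]
    ring
  have hgint : IntervalIntegrable g MeasureTheory.volume a b := by
    exact (((hcf'.pow 2).add (((continuous_const.mul hcH').mul (hcf.pow 2)))).sub
      (continuous_const.mul (hcf.pow 2))).intervalIntegrable _ _
  have hFTC : (∫ t in a..b, g t) = G b - G a :=
    intervalIntegral.integral_eq_sub_of_hasDerivAt hderiv hgint
  have hGzero : (∫ t in a..b, g t) = 0 := by
    rw [hFTC]; simp [hG, hfa, hfb]
  have i1 : IntervalIntegrable (fun t => deriv f t ^ 2) MeasureTheory.volume a b :=
    (hcf'.pow 2).intervalIntegrable _ _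
  have i2 : IntervalIntegrable (fun t => 3 / 2 * deriv H t * f t ^ 2) MeasureTheory.volume a b :=
    (((continuous_const.mul hcH')).mul (hcf.pow 2)).intervalIntegrable _ _
  have i3 : IntervalIntegrable (fun t => Υ ^ 2 * f t ^ 2) MeasureTheory.volume a b :=
    (continuous_const.mul (hcf.pow 2)).intervalIntegrable _ _
  have hsplit : (∫ t in a..b, g t) =
      (∫ t in a..b, deriv f t ^ 2) + (3 / 2) * (∫ t in a..b, deriv H t * f t ^ 2)
        - Υ ^ 2 * (∫ t in a..b, f t ^ 2) := by
    rw [hg]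
    rw [intervalIntegral.integral_sub (i1.add i2) i3,
      intervalIntegral.integral_add i1 i2]
    congr 1
    · congr 1
      rw [← intervalIntegral.integral_const_mul]
      congr 1 with t; ring
    · rw [← intervalIntegral.integral_const_mul]
  have key : (∫ t in a..b, deriv f t ^ 2)
      = Υ ^ 2 * (∫ t in a..b, f t ^ 2) - (3 / 2) * (∫ t in a..b, deriv H t * f t ^ 2) := by
    rw [hsplit] at hGzero; linarith
  have hlhs : (∫ t in a..b, deriv f t ^ 2 / Υ ^ 2)
      = (∫ t in a..b, deriv f t ^ 2) / Υ ^ 2 := intervalIntegral.integral_div _ _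
  rw [hlhs, key]
  have hΥ2 : (Υ : ℝ) ^ 2 ≠ 0 := pow_ne_zero _ (ne_of_gt hΥ)
  field_simp
end

section
/- Let f : ℝ → ℝ be twice continuously differentiable, H : ℝ → ℝ continuously differentiable, Υ > 0, and suppose f'' + 3Hf' + Υ²f = 0 on [a,b] with f(a)=f(b)=0 and ∫_a^b f² ≠ 0. Define ρ(t) = f(t)² + f'(t)²/Υ², P(t) = −f(t)² + f'(t)²/Υ², their averages ρ̄ = (1/(b−a))∫_a^b ρ, P̄ = (1/(b−a))∫_a^b P, and ε = −3H̄'/(4Υ²) with H̄' = (∫_a^b H' f²)/(∫_a^b f²). If ε ≠ −1, then P̄/ρ̄ = ε/(1+ε). -/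
open intervalIntegral

/-- Theorem 1 of the paper (coldness of scalar field dark matter):
for a solution of `f'' + 3Hf' + Υ²f = 0` on `[a,b]` with `f(a)=f(b)=0`,
with energy density `ρ = f² + f'²/Υ²` and pressure `P = −f² + f'²/Υ²`,
the averages satisfy `P̄/ρ̄ = ε/(1+ε)` where `ε = −3H̄'/(4Υ²)`. -/
theorem stmt1 (f H : ℝ → ℝ) (Υ a b : ℝ) (hab : a ≤ b)
    (hf : ContDiff ℝ 2 f) (hH : ContDiff ℝ 1 H) (hΥ : 0 < Υ)
    (hode : ∀ t ∈ Set.Icc a b,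
      deriv (deriv f) t + 3 * H t * deriv f t + Υ ^ 2 * f t = 0)
    (hfa : f a = 0) (hfb : f b = 0)
    (hne : (∫ t in a..b, f t ^ 2) ≠ 0)
    (ρ P : ℝ → ℝ)
    (hρ : ∀ t, ρ t = f t ^ 2 + (deriv f t) ^ 2 / Υ ^ 2)
    (hP : ∀ t, P t = -(f t ^ 2) + (deriv f t) ^ 2 / Υ ^ 2)
    (ρbar Pbar Hbar ε : ℝ)
    (hρbar : ρbar = (1 / (b - a)) * ∫ t in a..b, ρ t)
    (hPbar : Pbar = (1 / (b - a)) * ∫ t in a..b, P t)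
    (hHbar : Hbar = (∫ t in a..b, deriv H t * f t ^ 2) / (∫ t in a..b, f t ^ 2))
    (hε : ε = -(3 * Hbar) / (4 * Υ ^ 2))
    (hεne : ε ≠ -1) :
    Pbar / ρbar = ε / (1 + ε) := by
  have hlt : a < b := by
    rcases hab.lt_or_eq with h | rfl
    · exact h
    · simp at hne
  have hf2 : ContDiff ℝ (1 + 1 : ℕ) f := by exact_mod_cast hf
  have hf1 : ContDiff ℝ 1 (deriv f) := by
    have := (contDiff_succ_iff_deriv.mp
      (by exact_mod_cast hf2 : ContDiff ℝ ((1 : WithTop ℕ∞) + 1) f)).2.2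
    exact_mod_cast this
  have cf : Continuous f := hf.continuous
  have cf' : Continuous (deriv f) := hf1.continuous
  have cf'' : Continuous (deriv (deriv f)) := hf1.continuous_deriv le_rfl
  have cH : Continuous H := hH.continuous
  have cH' : Continuous (deriv H) := hH.continuous_deriv le_rfl
  have hdf : ∀ x, HasDerivAt f (deriv f x) x :=
    fun x => (hf.differentiable (by norm_num) x).hasDerivAt
  have hdf' : ∀ x, HasDerivAt (deriv f) (deriv (deriv f) x) x :=
    fun x => (hf1.differentiable one_ne_zero x).hasDerivAt
  have hdH : ∀ x, HasDerivAt H (deriv H x) x :=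
    fun x => (hH.differentiable one_ne_zero x).hasDerivAt
  set I := ∫ t in a..b, f t ^ 2 with hI
  set J := ∫ t in a..b, (deriv f t) ^ 2 with hJ
  set K := ∫ t in a..b, deriv H t * f t ^ 2 with hK
  -- integration by parts 1
  have ibp1 : (∫ t in a..b, deriv (deriv f) t * f t + deriv f t * deriv f t) = 0 := by
    rw [integral_deriv_mul_eq_sub_of_hasDerivAt
      (fun x _ => cf'.continuousWithinAt)
      (fun x _ => cf.continuousWithinAt)
      (fun x _ => hdf' x) (fun x _ => hdf x)
      (cf''.intervalIntegrable a b) (cf'.intervalIntegrable a b)]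
    simp [hfa, hfb]
  -- integration by parts 2
  have ibp2 : (∫ t in a..b, deriv H t * f t ^ 2 + H t * (2 * f t * deriv f t)) = 0 := by
    rw [integral_deriv_mul_eq_sub_of_hasDerivAt
      (fun x _ => cH.continuousWithinAt)
      (fun x _ => (show Continuous fun t => f t ^ 2 from cf.pow 2).continuousWithinAt)
      (fun x _ => hdH x)
      (fun x _ => by
        have : HasDerivAt (fun t => f t ^ 2) _ x := (hdf x).pow 2
        simpa [mul_comm, mul_assoc, mul_left_comm] using this)
      (cH'.intervalIntegrable a b)
      ((show Continuous fun t => 2 * f t * deriv f t from (continuous_const.mul cf).mul cf').intervalIntegrable a b)]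
    simp [hfa, hfb]
  -- the ODE multiplied by f and integrated, split into pieces
  have key : Υ ^ 2 * I = J + 3 / 2 * K := by
    have i1 : IntervalIntegrable
        (fun t => deriv (deriv f) t * f t + deriv f t * deriv f t) MeasureTheory.volume a b :=
      ((cf''.mul cf).add (cf'.mul cf')).intervalIntegrable a b
    have i2 : IntervalIntegrable
        (fun t => deriv H t * f t ^ 2 + H t * (2 * f t * deriv f t)) MeasureTheory.volume a b :=
      ((cH'.mul (cf.pow 2)).add (cH.mul ((continuous_const.mul cf).mul cf'))).intervalIntegrable a b
    have i2' : IntervalIntegrable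
        (fun t => (3/2 : ℝ) * (deriv H t * f t ^ 2 + H t * (2 * f t * deriv f t)))
        MeasureTheory.volume a b := i2.const_mul _
    have i3 : IntervalIntegrable
        (fun t => (3/2 : ℝ) * (deriv H t * f t ^ 2)) MeasureTheory.volume a b :=
      (continuous_const.mul (cH'.mul (cf.pow 2))).intervalIntegrable a b
    have i4 : IntervalIntegrable (fun t => (deriv f t) ^ 2) MeasureTheory.volume a b :=
      (cf'.pow 2).intervalIntegrable a b
    have i5 : IntervalIntegrable (fun t => Υ ^ 2 * f t ^ 2) MeasureTheory.volume a b :=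
      (continuous_const.mul (cf.pow 2)).intervalIntegrable a b
    have hc : (∫ t in a..b,
        (((deriv (deriv f) t * f t + deriv f t * deriv f t)
          + (3/2 : ℝ) * (deriv H t * f t ^ 2 + H t * (2 * f t * deriv f t)))
          - ((3/2 : ℝ) * (deriv H t * f t ^ 2) + (deriv f t) ^ 2 - Υ ^ 2 * f t ^ 2))) = 0 := by
      rw [intervalIntegral.integral_congr
        (g := fun t => (deriv (deriv f) t + 3 * H t * deriv f t + Υ ^ 2 * f t) * f t)
        (fun t _ => by ring)]
      rw [intervalIntegral.integral_congr (g := fun _ => (0:ℝ))]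
      · simp
      · intro t ht
        rw [Set.uIcc_of_le hab] at ht
        simp [hode t ht]
    rw [intervalIntegral.integral_sub (i1.add i2') ((i3.add i4).sub i5),
      intervalIntegral.integral_add i1 i2',
      intervalIntegral.integral_sub (i3.add i4) i5,
      intervalIntegral.integral_add i3 i4,
      intervalIntegral.integral_const_mul, intervalIntegral.integral_const_mul,
      intervalIntegral.integral_const_mul] at hc
    rw [ibp1, ibp2] at hc
    rw [← hI, ← hJ, ← hK] at hc
    linarith
  -- integrals of ρ and P
  have hρint : (∫ t in a..b, ρ t) = I + J / Υ ^ 2 := by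
    rw [hI, hJ, ← intervalIntegral.integral_div, ← intervalIntegral.integral_add
      ((show Continuous fun t => f t ^ 2 from cf.pow 2).intervalIntegrable a b) ((show Continuous fun t => deriv f t ^ 2 / Υ ^ 2 from (cf'.pow 2).div_const _).intervalIntegrable a b)]
    exact intervalIntegral.integral_congr fun t _ => hρ t
  have hPint : (∫ t in a..b, P t) = -I + J / Υ ^ 2 := by
    rw [hI, hJ, ← intervalIntegral.integral_div, ← intervalIntegral.integral_neg,
      ← intervalIntegral.integral_add
      ((show Continuous fun t => -(f t ^ 2) from (cf.pow 2).neg).intervalIntegrable a b) ((show Continuous fun t => deriv f t ^ 2 / Υ ^ 2 from (cf'.pow 2).div_const _).intervalIntegrable a b)]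
    exact intervalIntegral.integral_congr fun t _ => hP t
  -- algebra
  have hΥ2 : (Υ:ℝ) ^ 2 ≠ 0 := pow_ne_zero 2 hΥ.ne'
  have hεK : ε * (4 * Υ ^ 2 * I) = -(3 * K) := by
    rw [hε, hHbar]
    field_simp [hne]
    try ring
    try tauto
  have h1ε : 1 + ε ≠ 0 := fun h => hεne (by linarith)
  have hρne : I + J / Υ ^ 2 ≠ 0 := by
    intro h
    have h' : Υ ^ 2 * I + J = 0 := by
      field_simp at h
      linarith
    have h0 : (1 + ε) * (4 * Υ ^ 2 * I) = 0 := by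
      linear_combination hεK + 2 * key + 2 * h'
    rcases mul_eq_zero.mp h0 with h' | h'
    · exact h1ε h'
    · exact hne (by
        have : (4 * Υ ^ 2) * I = 0 := by linarith
        rcases mul_eq_zero.mp this with h'' | h''
        · exact absurd h'' (by positivity)
        · exact h'')
  have hba : (1:ℝ) / (b - a) ≠ 0 := by
    have : b - a ≠ 0 := sub_ne_zero.mpr hlt.ne'
    simp [this]
  rw [hρbar, hPbar, hρint, hPint]
  rw [mul_div_mul_left _ _ hba]
  rw [div_eq_div_iff hρne h1ε]
  field_simp
  linear_combination (-1) * key + (-1/2) * hεK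
end

section
/- For a smooth function f(t) on an FLRW spacetime −dt² + a(t)² ds_κ² depending only on t, the metric Laplacian satisfies □f = −f''(t) − 3H(t)f'(t), where H(t) = a'(t)/a(t). In particular, f satisfies the Klein-Gordon equation □f = Υ²f if and only if f'' + 3Hf' + Υ²f = 0. -/
/-- For a function `f` of `t` alone on the FLRW spacetime `−dt² + a(t)² ds_κ²`,
the metric Laplacian `□f = |g|^{-1/2} ∂ᵢ(|g|^{1/2} gⁱʲ ∂ⱼ f) = a⁻³ ∂ₜ(−a³ f')`
equals `−f'' − 3Hf'` with `H = a'/a`; hence `□f = Υ²f` iff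
`f'' + 3Hf' + Υ²f = 0`. -/
theorem stmt3 (a f : ℝ → ℝ) (Υ : ℝ)
    (ha : ContDiff ℝ 1 a) (hf : ContDiff ℝ 2 f) (hapos : ∀ t, 0 < a t) (t : ℝ) :
    ((a t) ^ 3)⁻¹ * deriv (fun s => -((a s) ^ 3 * deriv f s)) t =
      -(deriv (deriv f) t) - 3 * (deriv a t / a t) * deriv f t ∧
    (((a t) ^ 3)⁻¹ * deriv (fun s => -((a s) ^ 3 * deriv f s)) t = Υ ^ 2 * f t ↔
      deriv (deriv f) t + 3 * (deriv a t / a t) * deriv f t + Υ ^ 2 * f t = 0) := by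
  have ha' : DifferentiableAt ℝ a t := (ha.differentiable one_ne_zero) t
  have hdf : DifferentiableAt ℝ (deriv f) t :=
    ((hf.iterate_deriv' 1 1).differentiable one_ne_zero) t
  have ha3 : DifferentiableAt ℝ (fun s => (a s) ^ 3) t := ha'.pow 3
  have hprod : DifferentiableAt ℝ (fun s => (a s) ^ 3 * deriv f s) t := ha3.mul hdf
  have hne : a t ≠ 0 := (hapos t).ne'
  have hkey : ((a t) ^ 3)⁻¹ * deriv (fun s => -((a s) ^ 3 * deriv f s)) t =
      -(deriv (deriv f) t) - 3 * (deriv a t / a t) * deriv f t := by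
    rw [deriv.fun_neg, deriv_fun_mul ha3 hdf, deriv_fun_pow]
    · field_simp
      ring
    · exact ha'
  refine ⟨hkey, ?_⟩
  rw [hkey]
  constructor <;> intro h <;> linarith
end
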